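/- Under the standing assumptions on the 3-block Bregman ADMM, for every k ≥ 1 the iterates satisfy ‖p^{k+1}−p^k‖ ≤ ( √2·(ℓ_h+ℓ₃)/√σ_C ) · ( ‖z^{k+1}−z^k‖ + ‖z^k−z^{k−1}‖ ). -/

import Mathlib

open RealInnerProductSpace Filter

noncomputable section

/-- Euclidean space `ℝ^n`. -/
abbrev Eu (n : ℕ) := EuclideanSpace ℝ (Fin n)

/-- The Bregman distance `Δ_φ(u,v) = φ(u) − φ(v) − ⟨∇φ(v), u−v⟩` associated with a
differentiable function `φ` whose gradient is `φ'`. -/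
def Breg {n : ℕ} (φ : Eu n → ℝ) (φ' : Eu n → Eu n) (u v : Eu n) : ℝ :=
  φ u - φ v - ⟪φ' v, u - v⟫

/-- `F` is `μ`-strongly convex iff `F − (μ/2)‖·‖²` is convex. -/
def StrongConvex {n : ℕ} (μ : ℝ) (F : Eu n → ℝ) : Prop :=
  ConvexOn ℝ Set.univ (fun u => F u - μ / 2 * ‖u‖ ^ 2)

/-- The augmented Lagrangian
`L_α(x,y,z,p) = f(x)+g(y)+h(z)+⟨p, Ax+By+Cz⟩+(α/2)‖Ax+By+Cz‖²`. -/
def Lag {n₁ n₂ n₃ m : ℕ} (f : Eu n₁ → ℝ) (g : Eu n₂ → ℝ) (h : Eu n₃ → ℝ)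
    (A : Eu n₁ →L[ℝ] Eu m) (B : Eu n₂ →L[ℝ] Eu m) (C : Eu n₃ →L[ℝ] Eu m)
    (α : ℝ) (x : Eu n₁) (y : Eu n₂) (z : Eu n₃) (p : Eu m) : ℝ :=
  f x + g y + h z + ⟪p, A x + B y + C z⟫ + α / 2 * ‖A x + B y + C z‖ ^ 2

/-- All the data and standing assumptions of the 3-block Bregman ADMM:
objective functions `f, g, h`, Bregman kernels `φ₁, φ₂, φ₃` (with gradients
`φ₁', φ₂', φ₃'`, and `h'` the gradient of `h`), matrices `A, B, C` (as linear maps),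
parameters, iterate sequences `x, y, z, p`, and the standing hypotheses
(lower semicontinuity of `f, g`; differentiability with Lipschitz gradients;
convexity of kernels; the strong-convexity alternatives; quantitative full row rank
of `C`; the lower bound on `α`; and the BADMM update rules, where each of the three
primal updates is a global minimizer of the corresponding subproblem). -/
structure BADMM (n₁ n₂ n₃ m : ℕ) where
  f : Eu n₁ → ℝ
  g : Eu n₂ → ℝ
  h : Eu n₃ → ℝ
  φ₁ : Eu n₁ → ℝ
  φ₂ : Eu n₂ → ℝ
  φ₃ : Eu n₃ → ℝ
  h' : Eu n₃ → Eu n₃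
  φ₁' : Eu n₁ → Eu n₁
  φ₂' : Eu n₂ → Eu n₂
  φ₃' : Eu n₃ → Eu n₃
  A : Eu n₁ →L[ℝ] Eu m
  B : Eu n₂ →L[ℝ] Eu m
  C : Eu n₃ →L[ℝ] Eu m
  α : ℝ
  ℓh : ℝ
  ℓ₁ : ℝ
  ℓ₂ : ℝ
  ℓ₃ : ℝ
  μ₁ : ℝ
  μ₂ : ℝ
  μ₃ : ℝ
  σC : ℝ
  x : ℕ → Eu n₁
  y : ℕ → Eu n₂
  z : ℕ → Eu n₃
  p : ℕ → Eu m
  hα_pos : 0 < α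
  hf_lsc : LowerSemicontinuous f
  hg_lsc : LowerSemicontinuous g
  hgrad_h : ∀ v, HasGradientAt h (h' v) v
  hgrad_φ₁ : ∀ v, HasGradientAt φ₁ (φ₁' v) v
  hgrad_φ₂ : ∀ v, HasGradientAt φ₂ (φ₂' v) v
  hgrad_φ₃ : ∀ v, HasGradientAt φ₃ (φ₃' v) v
  hℓh_nonneg : 0 ≤ ℓh
  hℓ₁_nonneg : 0 ≤ ℓ₁
  hℓ₂_nonneg : 0 ≤ ℓ₂
  hℓ₃_nonneg : 0 ≤ ℓ₃
  hlip_h : ∀ a b, ‖h' a - h' b‖ ≤ ℓh * ‖a - b‖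
  hlip_φ₁ : ∀ a b, ‖φ₁' a - φ₁' b‖ ≤ ℓ₁ * ‖a - b‖
  hlip_φ₂ : ∀ a b, ‖φ₂' a - φ₂' b‖ ≤ ℓ₂ * ‖a - b‖
  hlip_φ₃ : ∀ a b, ‖φ₃' a - φ₃' b‖ ≤ ℓ₃ * ‖a - b‖
  hφ₁_convex : ConvexOn ℝ Set.univ φ₁
  hφ₂_convex : ConvexOn ℝ Set.univ φ₂
  hφ₃_convex : ConvexOn ℝ Set.univ φ₃
  hμ₁_pos : 0 < μ₁
  hμ₂_pos : 0 < μ₂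
  hμ₃_pos : 0 < μ₃
  hsc₁ : StrongConvex μ₁ f ∨ StrongConvex μ₁ φ₁
  hsc₂ : StrongConvex μ₂ g ∨ StrongConvex μ₂ φ₂
  hsc₃ : StrongConvex μ₃ h ∨ StrongConvex μ₃ φ₃
  hσC_pos : 0 < σC
  hC_rank : ∀ u : Eu m, σC * ‖u‖ ^ 2 ≤ ‖(ContinuousLinearMap.adjoint C) u‖ ^ 2
  hα_large : 4 * ((ℓh + ℓ₃) ^ 2 + ℓ₃ ^ 2) / (μ₃ * σC) < α
  hx_min : ∀ k, ∀ ξ : Eu n₁,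
    Lag f g h A B C α (x (k+1)) (y k) (z k) (p k) + Breg φ₁ φ₁' (x (k+1)) (x k) ≤
      Lag f g h A B C α ξ (y k) (z k) (p k) + Breg φ₁ φ₁' ξ (x k)
  hy_min : ∀ k, ∀ ξ : Eu n₂,
    Lag f g h A B C α (x (k+1)) (y (k+1)) (z k) (p k) + Breg φ₂ φ₂' (y (k+1)) (y k) ≤
      Lag f g h A B C α (x (k+1)) ξ (z k) (p k) + Breg φ₂ φ₂' ξ (y k)
  hz_min : ∀ k, ∀ ξ : Eu n₃,
    Lag f g h A B C α (x (k+1)) (y (k+1)) (z (k+1)) (p k) + Breg φ₃ φ₃' (z (k+1)) (z k) ≤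
      Lag f g h A B C α (x (k+1)) (y (k+1)) ξ (p k) + Breg φ₃ φ₃' ξ (z k)
  hp_upd : ∀ k, p (k+1) = p k + α • (A (x (k+1)) + B (y (k+1)) + C (z (k+1)))

namespace BADMM

variable {n₁ n₂ n₃ m : ℕ} (P : BADMM n₁ n₂ n₃ m)

/-- `σ₀ = 2ℓ₃²/(ασ_C)`. -/
def σ0 : ℝ := 2 * P.ℓ₃ ^ 2 / (P.α * P.σC)

/-- `σ₁ = (1/2)·min(μ₁, μ₂, μ₃ − 4(ℓ_h+ℓ₃)²/(ασ_C) − 4ℓ₃²/(ασ_C))`. -/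
def σ1 : ℝ :=
  (1 / 2) * min P.μ₁ (min P.μ₂
    (P.μ₃ - 4 * (P.ℓh + P.ℓ₃) ^ 2 / (P.α * P.σC) - 4 * P.ℓ₃ ^ 2 / (P.α * P.σC)))

/-- The augmented Lagrangian of the problem, `L_α`. -/
def L (x : Eu n₁) (y : Eu n₂) (z : Eu n₃) (p : Eu m) : ℝ :=
  Lag P.f P.g P.h P.A P.B P.C P.α x y z p

/-- `L̂(x,y,z,p,ẑ) = L_α(x,y,z,p) + σ₀‖z−ẑ‖²`. -/
def Lhat (x : Eu n₁) (y : Eu n₂) (z : Eu n₃) (p : Eu m) (zh : Eu n₃) : ℝ :=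
  P.L x y z p + P.σ0 * ‖z - zh‖ ^ 2

/-- `‖w^{k+1}−w^k‖²`. -/
def dw2 (k : ℕ) : ℝ :=
  ‖P.x (k+1) - P.x k‖ ^ 2 + ‖P.y (k+1) - P.y k‖ ^ 2 +
    ‖P.z (k+1) - P.z k‖ ^ 2 + ‖P.p (k+1) - P.p k‖ ^ 2

end BADMM


lemma zgrad_aux {n₃ m : ℕ} (h φ : Eu n₃ → ℝ) (h' φ' : Eu n₃ → Eu n₃)
    (hh : ∀ v, HasGradientAt h (h' v) v) (hφ : ∀ v, HasGradientAt φ (φ' v) v)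
    (C : Eu n₃ →L[ℝ] Eu m) (c p : Eu m) (α cst cst2 : ℝ) (q : Eu n₃) (zk : Eu n₃) (z : Eu n₃) :
    HasFDerivAt (fun ξ => cst + h ξ + ⟪p, c + C ξ⟫ + α / 2 * ‖c + C ξ‖ ^ 2
        + (φ ξ - cst2 - ⟪q, ξ - zk⟫))
      ((InnerProductSpace.toDual ℝ (Eu n₃))
        (h' z + (ContinuousLinearMap.adjoint C) (p + α • (c + C z)) + (φ' z - q))) z := by
  have haff : HasFDerivAt (fun ξ : Eu n₃ => c + C ξ) (C : Eu n₃ →L[ℝ] Eu m) z :=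
    C.hasFDerivAt.const_add c
  have h1 : HasFDerivAt h ((InnerProductSpace.toDual ℝ (Eu n₃)) (h' z)) z :=
    (hh z).hasFDerivAt
  have h2 := (hasFDerivAt_const p z).inner ℝ haff
  have h3 := haff.norm_sq.const_mul (α / 2)
  have h4 : HasFDerivAt φ ((InnerProductSpace.toDual ℝ (Eu n₃)) (φ' z)) z :=
    (hφ z).hasFDerivAt
  have h5 := (hasFDerivAt_const q z).inner ℝ ((hasFDerivAt_id z).sub_const zk)
  have := ((((h1.const_add cst).add h2).add h3).add ((h4.sub_const cst2).sub h5))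
  refine this.congr_fderiv ?_
  ext u
  simp [ContinuousLinearMap.adjoint_inner_left, inner_add_left, inner_sub_left,
    real_inner_smul_left, fderivInnerCLM_apply, real_inner_comm (C u)]
  ring

lemma badmm_key {n₁ n₂ n₃ m : ℕ} (P : BADMM n₁ n₂ n₃ m) (k : ℕ) :
    (ContinuousLinearMap.adjoint P.C) (P.p (k+1)) =
      -(P.h' (P.z (k+1))) - P.φ₃' (P.z (k+1)) + P.φ₃' (P.z k) := by
  set F : Eu n₃ → ℝ := fun ξ =>
    (P.f (P.x (k+1)) + P.g (P.y (k+1))) + P.h ξ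
      + ⟪P.p k, (P.A (P.x (k+1)) + P.B (P.y (k+1))) + P.C ξ⟫
      + P.α / 2 * ‖(P.A (P.x (k+1)) + P.B (P.y (k+1))) + P.C ξ‖ ^ 2
      + (P.φ₃ ξ - P.φ₃ (P.z k) - ⟪P.φ₃' (P.z k), ξ - P.z k⟫) with hF
  have hFeq : ∀ ξ, F ξ = Lag P.f P.g P.h P.A P.B P.C P.α (P.x (k+1)) (P.y (k+1)) ξ (P.p k)
      + Breg P.φ₃ P.φ₃' ξ (P.z k) := by
    intro ξ
    simp only [hF, Lag, Breg, add_assoc]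
  have hmin : IsLocalMin F (P.z (k+1)) := by
    apply Filter.Eventually.of_forall
    intro ξ
    rw [hFeq, hFeq]
    exact P.hz_min k ξ
  have hder := zgrad_aux P.h P.φ₃ P.h' P.φ₃' P.hgrad_h P.hgrad_φ₃ P.C
    (P.A (P.x (k+1)) + P.B (P.y (k+1))) (P.p k) P.α
    (P.f (P.x (k+1)) + P.g (P.y (k+1))) (P.φ₃ (P.z k)) (P.φ₃' (P.z k)) (P.z k) (P.z (k+1))
  have h0 := hmin.hasFDerivAt_eq_zero hder
  have h0' : P.h' (P.z (k+1))
      + (ContinuousLinearMap.adjoint P.C)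
          (P.p k + P.α • ((P.A (P.x (k+1)) + P.B (P.y (k+1))) + P.C (P.z (k+1))))
      + (P.φ₃' (P.z (k+1)) - P.φ₃' (P.z k)) = 0 :=
    (InnerProductSpace.toDual ℝ (Eu n₃)).map_eq_zero_iff.mp h0
  rw [P.hp_upd k]
  rw [show P.A (P.x (k+1)) + P.B (P.y (k+1)) + P.C (P.z (k+1))
      = (P.A (P.x (k+1)) + P.B (P.y (k+1))) + P.C (P.z (k+1)) from rfl]
  linear_combination (norm := module) h0'

/-- norm bound on the successive dual differences. -/
theorem badmm_dual_diff_bound {n₁ n₂ n₃ m : ℕ} (P : BADMM n₁ n₂ n₃ m) :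
    ∀ k : ℕ, 1 ≤ k →
      ‖P.p (k+1) - P.p k‖ ≤
        (Real.sqrt 2 * (P.ℓh + P.ℓ₃) / Real.sqrt P.σC) *
          (‖P.z (k+1) - P.z k‖ + ‖P.z k - P.z (k-1)‖) := by
  intro k hk
  obtain ⟨j, rfl⟩ : ∃ j, k = j + 1 := ⟨k - 1, by omega⟩
  simp only [Nat.add_sub_cancel]
  set a := ‖P.z (j+1+1) - P.z (j+1)‖ with ha
  set b := ‖P.z (j+1) - P.z j‖ with hb
  have hCd : (ContinuousLinearMap.adjoint P.C) (P.p (j+1+1) - P.p (j+1)) =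
      (P.h' (P.z (j+1)) - P.h' (P.z (j+1+1)))
        + (P.φ₃' (P.z (j+1)) - P.φ₃' (P.z (j+1+1)))
        + (P.φ₃' (P.z (j+1)) - P.φ₃' (P.z j)) := by
    rw [map_sub, badmm_key P (j+1), badmm_key P j]
    module
  have hL : 0 ≤ P.ℓh + P.ℓ₃ := by linarith [P.hℓh_nonneg, P.hℓ₃_nonneg]
  have hnorm : ‖(ContinuousLinearMap.adjoint P.C) (P.p (j+1+1) - P.p (j+1))‖ ≤
      (P.ℓh + P.ℓ₃) * (a + b) := by
    rw [hCd]
    calc ‖(P.h' (P.z (j+1)) - P.h' (P.z (j+1+1)))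
        + (P.φ₃' (P.z (j+1)) - P.φ₃' (P.z (j+1+1)))
        + (P.φ₃' (P.z (j+1)) - P.φ₃' (P.z j))‖
        ≤ ‖P.h' (P.z (j+1)) - P.h' (P.z (j+1+1))‖
          + ‖P.φ₃' (P.z (j+1)) - P.φ₃' (P.z (j+1+1))‖
          + ‖P.φ₃' (P.z (j+1)) - P.φ₃' (P.z j)‖ := norm_add₃_le
      _ ≤ P.ℓh * ‖P.z (j+1) - P.z (j+1+1)‖ + P.ℓ₃ * ‖P.z (j+1) - P.z (j+1+1)‖
          + P.ℓ₃ * ‖P.z (j+1) - P.z j‖ := by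
          gcongr <;> [exact P.hlip_h _ _; exact P.hlip_φ₃ _ _; exact P.hlip_φ₃ _ _]
      _ ≤ (P.ℓh + P.ℓ₃) * (a + b) := by
          rw [norm_sub_rev (P.z (j+1))]
          have hb0 : 0 ≤ b := norm_nonneg _
          have ha0 : 0 ≤ a := norm_nonneg _
          nlinarith [P.hℓh_nonneg, P.hℓ₃_nonneg]
  have hsq : P.σC * ‖P.p (j+1+1) - P.p (j+1)‖ ^ 2 ≤ ((P.ℓh + P.ℓ₃) * (a + b)) ^ 2 := by
    refine le_trans (P.hC_rank _) ?_
    exact pow_le_pow_left₀ (norm_nonneg _) hnorm 2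
  have hs := Real.sqrt_le_sqrt hsq
  rw [Real.sqrt_mul P.hσC_pos.le, Real.sqrt_sq (norm_nonneg _),
    Real.sqrt_sq (by positivity)] at hs
  have hsC : 0 < Real.sqrt P.σC := Real.sqrt_pos.mpr P.hσC_pos
  rw [div_mul_eq_mul_div, le_div_iff₀ hsC]
  have h2 : (1 : ℝ) ≤ Real.sqrt 2 := by
    rw [show (1:ℝ) = Real.sqrt 1 from (Real.sqrt_one).symm]
    exact Real.sqrt_le_sqrt (by norm_num)
  have hab : 0 ≤ a + b := by positivity
  nlinarith [mul_nonneg hL hab]
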